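/- Let R be Hermitian with spectral decomposition Uᴴ R U = diag(D₁, -D₂) where D₁ > 0 diagonal and D₂ ≥ 0 diagonal (U unitary). Then ΔR := U diag(0, D₂) Uᴴ is a minimum-Frobenius-norm Hermitian perturbation such that R + ΔR is positive semidefinite; i.e., for every matrix E with R + E positive semidefinite, ‖E‖_F ≥ ‖ΔR‖_F. -/

import Mathlib

open Matrix
open scoped ComplexOrder

lemma diag_nonneg' {n : Type*} [Fintype n] [DecidableEq n] {P : Matrix n n ℂ}
    (hP : P.PosSemidef) (i : n) : 0 ≤ P i i := by
  have := hP.dotProduct_mulVec_nonneg (Pi.single i 1)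
  simpa [dotProduct, mulVec, Pi.single_apply] using this

lemma frob_sq_eq {n : Type*} [Fintype n] [DecidableEq n] (M : Matrix n n ℂ) :
    ((∑ i, ∑ j, ‖M i j‖ ^ 2 : ℝ) : ℂ) = Matrix.trace (Mᴴ * M) := by
  simp only [Matrix.trace, Matrix.diag, Matrix.mul_apply, Matrix.conjTranspose_apply]
  rw [Finset.sum_comm]
  push_cast
  congr 1; ext i; congr 1; ext j
  rw [Complex.star_def, ← Complex.normSq_eq_conj_mul_self, Complex.normSq_eq_norm_sq]
  norm_num

lemma conj_frob_sq {n : Type*} [Fintype n] [DecidableEq n] (U M : Matrix n n ℂ)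
    (hU1 : Uᴴ * U = 1) (hU2 : U * Uᴴ = 1) :
    ∑ i, ∑ j, ‖(U * M * Uᴴ) i j‖ ^ 2 = ∑ i, ∑ j, ‖M i j‖ ^ 2 := by
  have h := frob_sq_eq (U * M * Uᴴ)
  have h2 := frob_sq_eq M
  have : ((U * M * Uᴴ)ᴴ * (U * M * Uᴴ)) = U * (Mᴴ * M) * Uᴴ := by
    simp only [conjTranspose_mul, conjTranspose_conjTranspose]
    calc U * (Mᴴ * Uᴴ) * (U * M * Uᴴ) = U * Mᴴ * (Uᴴ * U) * (M * Uᴴ) := by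
          simp [Matrix.mul_assoc]
      _ = U * (Mᴴ * M) * Uᴴ := by rw [hU1]; simp [Matrix.mul_assoc]
  rw [this] at h
  have ht : Matrix.trace (U * (Mᴴ * M) * Uᴴ) = Matrix.trace (Mᴴ * M) := by
    rw [Matrix.trace_mul_comm, ← Matrix.mul_assoc, hU1, Matrix.one_mul]
  rw [ht, ← h2] at h
  exact_mod_cast h

/-- The Frobenius norm of a complex matrix. -/
noncomputable def frobNorm {α β : Type*} [Fintype α] [Fintype β] (M : Matrix α β ℂ) : ℝ :=
  Real.sqrt (∑ i, ∑ j, ‖M i j‖ ^ 2)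

theorem stmt16 {N₁ N₂ : ℕ}
    (R : Matrix (Fin N₁ ⊕ Fin N₂) (Fin N₁ ⊕ Fin N₂) ℂ) (hR : R.IsHermitian)
    (U : Matrix (Fin N₁ ⊕ Fin N₂) (Fin N₁ ⊕ Fin N₂) ℂ)
    (hU : Uᴴ * U = 1 ∧ U * Uᴴ = 1)
    (d₁ : Fin N₁ → ℝ) (d₂ : Fin N₂ → ℝ)
    (hd₁ : ∀ i, 0 < d₁ i) (hd₂ : ∀ i, 0 ≤ d₂ i)
    (hdec : Uᴴ * R * U =
      Matrix.fromBlocks (Matrix.diagonal fun i => (d₁ i : ℂ)) 0 0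
        (-(Matrix.diagonal fun i => (d₂ i : ℂ)))) :
    (R + U * Matrix.fromBlocks 0 0 0 (Matrix.diagonal fun i => (d₂ i : ℂ)) * Uᴴ).PosSemidef ∧
    ∀ E : Matrix (Fin N₁ ⊕ Fin N₂) (Fin N₁ ⊕ Fin N₂) ℂ, (R + E).PosSemidef →
      frobNorm (U * Matrix.fromBlocks 0 0 0 (Matrix.diagonal fun i => (d₂ i : ℂ)) * Uᴴ) ≤
        frobNorm E := by
  obtain ⟨hU1, hU2⟩ := hU
  set D : Matrix (Fin N₁ ⊕ Fin N₂) (Fin N₁ ⊕ Fin N₂) ℂ :=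
    Matrix.fromBlocks (Matrix.diagonal fun i => (d₁ i : ℂ)) 0 0
      (-(Matrix.diagonal fun i => (d₂ i : ℂ))) with hD
  set B : Matrix (Fin N₁ ⊕ Fin N₂) (Fin N₁ ⊕ Fin N₂) ℂ :=
    Matrix.fromBlocks 0 0 0 (Matrix.diagonal fun i => (d₂ i : ℂ)) with hB
  have hRUDU : R = U * D * Uᴴ := by
    rw [← hdec]
    calc R = (U * Uᴴ) * R * (U * Uᴴ) := by rw [hU2]; simp
      _ = U * (Uᴴ * R * U) * Uᴴ := by simp [Matrix.mul_assoc]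
  have hDB : D + B = Matrix.diagonal (Sum.elim (fun i => (d₁ i : ℂ)) (fun _ => 0)) := by
    rw [hD, hB, ← Matrix.fromBlocks_diagonal]
    ext (i|i) (j|j) <;> simp [Matrix.fromBlocks, Matrix.diagonal_apply] <;> split <;> simp
  constructor
  · have : R + U * B * Uᴴ = U * (D + B) * Uᴴ := by
      rw [hRUDU, Matrix.mul_add, Matrix.add_mul]
    rw [this, hDB]
    refine Matrix.PosSemidef.mul_mul_conjTranspose_same ?_ U
    refine Matrix.posSemidef_diagonal_iff.mpr ?_
    rintro (i|i)
    · simpa using (hd₁ i).le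
    · simp
  · intro E hE
    set F : Matrix (Fin N₁ ⊕ Fin N₂) (Fin N₁ ⊕ Fin N₂) ℂ := Uᴴ * E * U with hF
    have hEF : E = U * F * Uᴴ := by
      rw [hF]
      calc E = (U * Uᴴ) * E * (U * Uᴴ) := by rw [hU2]; simp
        _ = U * (Uᴴ * E * U) * Uᴴ := by simp [Matrix.mul_assoc]
    -- PSD of D + F
    have hDF : (D + F).PosSemidef := by
      have := hE.conjTranspose_mul_mul_same U
      have heq : Uᴴ * (R + E) * U = D + F := by
        rw [Matrix.mul_add, Matrix.add_mul, hdec, hF]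
      rwa [heq] at this
    -- key entrywise bound
    have hkey : ∀ i : Fin N₂, d₂ i ≤ (F (Sum.inr i) (Sum.inr i)).re := by
      intro i
      have h0 := diag_nonneg' hDF (Sum.inr i)
      have hDe : D (Sum.inr i) (Sum.inr i) = (-(d₂ i) : ℝ) := by
        simp [hD, Matrix.fromBlocks, Matrix.diagonal_apply]
      rw [Matrix.add_apply, hDe] at h0
      have := (Complex.le_def.mp h0).1
      simpa using this
    -- Frobenius computations
    have hBsum : ∑ i, ∑ j, ‖B i j‖ ^ 2 = ∑ i : Fin N₂, (d₂ i) ^ 2 := by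
      rw [hB]
      simp [Fintype.sum_sum_type, Matrix.fromBlocks, Matrix.diagonal_apply, apply_ite,
        Finset.sum_ite_eq, abs_of_nonneg (hd₂ _)]
    have hFbound : ∑ i : Fin N₂, (d₂ i) ^ 2 ≤ ∑ i, ∑ j, ‖F i j‖ ^ 2 := by
      have h1 : ∑ i : Fin N₂, (d₂ i) ^ 2 ≤ ∑ i : Fin N₂, ‖F (Sum.inr i) (Sum.inr i)‖ ^ 2 := by
        refine Finset.sum_le_sum fun i _ => ?_
        have h2 : d₂ i ≤ ‖F (Sum.inr i) (Sum.inr i)‖ :=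
          (hkey i).trans ((Complex.re_le_norm _).trans_eq rfl)
        exact pow_le_pow_left₀ (hd₂ i) h2 2
      have h2 : ∑ i : Fin N₂, ‖F (Sum.inr i) (Sum.inr i)‖ ^ 2 ≤
          ∑ p : Fin N₁ ⊕ Fin N₂, ‖F p p‖ ^ 2 := by
        rw [Fintype.sum_sum_type]
        have : (0:ℝ) ≤ ∑ i : Fin N₁, ‖F (Sum.inl i) (Sum.inl i)‖ ^ 2 :=
          Finset.sum_nonneg fun _ _ => by positivity
        linarith
      have h3 : ∑ p : Fin N₁ ⊕ Fin N₂, ‖F p p‖ ^ 2 ≤ ∑ i, ∑ j, ‖F i j‖ ^ 2 := by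
        refine Finset.sum_le_sum fun p _ => ?_
        exact Finset.single_le_sum (f := fun j => ‖F p j‖ ^ 2) (fun j _ => by positivity) (Finset.mem_univ p)
      linarith
    have hE2 : ∑ i, ∑ j, ‖E i j‖ ^ 2 = ∑ i, ∑ j, ‖F i j‖ ^ 2 := by
      rw [hEF]; exact conj_frob_sq U F hU1 hU2
    have hΔ2 : ∑ i, ∑ j, ‖(U * B * Uᴴ) i j‖ ^ 2 = ∑ i : Fin N₂, (d₂ i) ^ 2 := by
      rw [conj_frob_sq U B hU1 hU2, hBsum]
    unfold frobNorm
    apply Real.sqrt_le_sqrt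
    rw [hΔ2, hE2]
    exact hFbound
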